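/- Let λ < 0. Then there exist constants C > 0 and x₀ > 0 such that for all x ≥ x₀, | (1 - F_λ(x)) · (-λ) π (1+λ²) x² exp((1+λ²)x²/2) - (1 - ((1+3λ²)/(λ²(1+λ²))) x^{-2} + ((15λ⁴ + 10λ² + 3)/(λ⁴(1+λ²)²)) x^{-4}) | ≤ C x^{-6}; that is, 1 - F_λ(x) = (exp(-(1+λ²)x²/2) / ((-λ)π(1+λ²)x²)) · (1 - ((1+3λ²)/(λ²(1+λ²))) x^{-2} + ((15λ⁴ + 10λ² + 3)/(λ⁴(1+λ²)²)) x^{-4} + O(x^{-6})) as x → ∞. -/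

import Mathlib

open Real MeasureTheory Filter Topology

/-- Standard normal density. -/
noncomputable def stdPhi (x : ℝ) : ℝ := (Real.sqrt (2 * Real.pi))⁻¹ * Real.exp (-(x ^ 2) / 2)

/-- Standard normal cdf. -/
noncomputable def stdCdf (x : ℝ) : ℝ := ∫ t in Set.Iic x, stdPhi t

/-- Skew normal density with shape parameter l. -/
noncomputable def snPdf (l x : ℝ) : ℝ := 2 * stdPhi x * stdCdf (l * x)

/-- Skew normal cdf with shape parameter l. -/
noncomputable def snCdf (l x : ℝ) : ℝ := ∫ t in Set.Iic x, snPdf l t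

/-- Gumbel extreme value distribution function. -/
noncomputable def gumbel (x : ℝ) : ℝ := Real.exp (-Real.exp (-x))



noncomputable def Kc : ℝ := (Real.sqrt (2 * Real.pi))⁻¹

lemma Kc_pos : 0 < Kc := inv_pos.2 (Real.sqrt_pos.2 (by positivity))

lemma Kc_sq : Kc ^ 2 = (2 * Real.pi)⁻¹ := by
  rw [Kc, inv_pow, sq_sqrt (by positivity : (0:ℝ) ≤ 2 * Real.pi)]

lemma stdPhi_eq (x : ℝ) : stdPhi x = Kc * Real.exp (-(x ^ 2) / 2) := rfl

lemma stdPhi_pos (x : ℝ) : 0 < stdPhi x := by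
  rw [stdPhi_eq]
  exact mul_pos Kc_pos (Real.exp_pos _)

lemma stdPhi_neg (x : ℝ) : stdPhi (-x) = stdPhi x := by simp [stdPhi]

lemma continuous_stdPhi : Continuous stdPhi := by
  unfold stdPhi; fun_prop

lemma hasDerivAt_stdPhi (x : ℝ) : HasDerivAt stdPhi (-x * stdPhi x) x := by
  have h : HasDerivAt (fun y : ℝ => -(y ^ 2) / 2) (-x) x := by
    have := (hasDerivAt_pow 2 x).neg.div_const 2
    simpa using this.congr_deriv (by ring)
  have := (h.exp).const_mul Kc
  show HasDerivAt (fun y => Kc * Real.exp (-(y ^ 2) / 2)) _ x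
  simpa [stdPhi_eq, mul_comm, mul_assoc, mul_left_comm] using this

lemma integrable_stdPhi : Integrable stdPhi := by
  have h : stdPhi = fun x => Kc * Real.exp (-(1/2 : ℝ) * x ^ 2) := by
    funext x; rw [stdPhi_eq]; ring_nf
  rw [h]
  exact (integrable_exp_neg_mul_sq (by norm_num)).const_mul Kc

lemma integral_stdPhi : ∫ x, stdPhi x = 1 := by
  have h : ∀ x : ℝ, stdPhi x = Kc * Real.exp (-(1/2 : ℝ) * x ^ 2) := by
    intro x; rw [stdPhi_eq]; ring_nf
  simp_rw [h]
  rw [integral_const_mul, integral_gaussian]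
  have : Real.pi / (1/2 : ℝ) = 2 * Real.pi := by ring
  rw [this, Kc]
  exact inv_mul_cancel₀ (ne_of_gt (Real.sqrt_pos.2 (by positivity)))

lemma stdCdf_neg_eq_Ioi (v : ℝ) : stdCdf (-v) = ∫ t in Set.Ioi v, stdPhi t := by
  rw [stdCdf, ← integral_comp_neg_Ioi]
  simp_rw [stdPhi_neg]

lemma stdCdf_add_neg (v : ℝ) : stdCdf v + stdCdf (-v) = 1 := by
  rw [stdCdf, stdCdf_neg_eq_Ioi, intervalIntegral.integral_Iic_add_Ioi integrable_stdPhi.integrableOn integrable_stdPhi.integrableOn, integral_stdPhi]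

lemma stdCdf_nonneg (v : ℝ) : 0 ≤ stdCdf v :=
  setIntegral_nonneg measurableSet_Iic fun x _ => (stdPhi_pos x).le

lemma stdCdf_le_one (v : ℝ) : stdCdf v ≤ 1 := by
  have := stdCdf_add_neg v
  nlinarith [stdCdf_nonneg (-v)]

lemma hasDerivAt_stdCdf (y : ℝ) : HasDerivAt stdCdf (stdPhi y) y := by
  have heq : stdCdf = fun x => stdCdf 0 + ∫ t in (0:ℝ)..x, stdPhi t := by
    funext x
    rw [← intervalIntegral.integral_Iic_sub_Iic integrable_stdPhi.integrableOn
      integrable_stdPhi.integrableOn]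
    simp [stdCdf]
  rw [heq]
  exact ((continuous_stdPhi.integral_hasStrictDerivAt 0 y).hasDerivAt).const_add _

lemma continuous_stdCdf : Continuous stdCdf :=
  continuous_iff_continuousAt.2 fun y => (hasDerivAt_stdCdf y).continuousAt



-- Stage 2

lemma tendsto_exp_neg_sq {b : ℝ} (hb : 0 < b) :
    Tendsto (fun t : ℝ => Real.exp (-b * t ^ 2)) atTop (𝓝 0) := by
  apply Real.tendsto_exp_atBot.comp
  have h1 : Tendsto (fun t : ℝ => t ^ 2) atTop atTop := tendsto_pow_atTop (by norm_num)
  exact (tendsto_const_mul_atBot_of_neg (by linarith)).2 h1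

lemma tendsto_stdPhi_atTop : Tendsto stdPhi atTop (𝓝 0) := by
  have h : stdPhi = fun t => Kc * Real.exp (-(1/2 : ℝ) * t ^ 2) := by
    funext t; rw [stdPhi_eq]; ring_nf
  rw [h, show (0 : ℝ) = Kc * 0 by ring]
  exact (tendsto_exp_neg_sq (by norm_num)).const_mul Kc

lemma integrableOn_of_le_gauss {x b : ℝ} (hb : 0 < b) {f : ℝ → ℝ}
    (hf : ContinuousOn f (Set.Ioi x)) {M : ℝ}
    (hM : ∀ t ∈ Set.Ioi x, |f t| ≤ M * Real.exp (-b * t ^ 2)) :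
    IntegrableOn f (Set.Ioi x) := by
  apply Integrable.mono' (((integrable_exp_neg_mul_sq hb).const_mul M).integrableOn)
    (hf.aestronglyMeasurable measurableSet_Ioi)
  filter_upwards [ae_restrict_mem measurableSet_Ioi] with t ht
  simpa [Real.norm_eq_abs] using hM t ht

lemma integral_Ioi_mul_exp {b : ℝ} (hb : 0 < b) (x : ℝ) :
    ∫ t in Set.Ioi x, t * Real.exp (-b * t ^ 2) = Real.exp (-b * x ^ 2) / (2 * b) := by
  have hderiv : ∀ t ∈ Set.Ici x, HasDerivAt (fun s => -Real.exp (-b * s ^ 2) / (2 * b))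
      (t * Real.exp (-b * t ^ 2)) t := by
    intro t _
    have h1 : HasDerivAt (fun s : ℝ => -b * s ^ 2) (-b * (2 * t)) t := by
      simpa using ((hasDerivAt_pow 2 t).const_mul (-b))
    have h2 := (h1.exp.neg).div_const (2 * b)
    have heq : -(Real.exp (-b * t ^ 2) * (-b * (2 * t))) / (2 * b)
        = t * Real.exp (-b * t ^ 2) := by field_simp
    rw [heq] at h2; exact h2
  have htend : Tendsto (fun s : ℝ => -Real.exp (-b * s ^ 2) / (2 * b)) atTop (𝓝 0) := by
    rw [show (0 : ℝ) = -(0 : ℝ) / (2 * b) by ring]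
    exact ((tendsto_exp_neg_sq hb).neg).div_const (2 * b)
  have := integral_Ioi_of_hasDerivAt_of_tendsto' hderiv
    ((integrable_mul_exp_neg_mul_sq hb).integrableOn) htend
  rw [this]; ring

lemma integral_Ioi_mul_stdPhi (v : ℝ) : ∫ t in Set.Ioi v, t * stdPhi t = stdPhi v := by
  have h : ∀ t : ℝ, t * stdPhi t = Kc * (t * Real.exp (-(1/2 : ℝ) * t ^ 2)) := by
    intro t; rw [stdPhi_eq]; ring_nf
  simp_rw [h]
  rw [integral_const_mul, integral_Ioi_mul_exp (by norm_num : (0:ℝ) < 1/2), stdPhi_eq]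
  ring_nf

noncomputable def polyP (t : ℝ) : ℝ := t⁻¹ - (t ^ 3)⁻¹ + 3 * (t ^ 5)⁻¹
noncomputable def mills (t : ℝ) : ℝ := stdPhi t * polyP t

lemma hasDerivAt_polyP {t : ℝ} (ht : t ≠ 0) :
    HasDerivAt polyP (-(t ^ 2)⁻¹ + 3 * (t ^ 4)⁻¹ - 15 * (t ^ 6)⁻¹) t := by
  have h1 : HasDerivAt (fun y : ℝ => y⁻¹) (-(t ^ 2)⁻¹) t := by
    simpa using hasDerivAt_inv ht
  have h3 : HasDerivAt (fun y : ℝ => (y ^ 3)⁻¹) (-(3 * t ^ 2) / (t ^ 3) ^ 2) t := by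
    simpa [Pi.inv_def] using (hasDerivAt_pow 3 t).inv (pow_ne_zero 3 ht)
  have h5 : HasDerivAt (fun y : ℝ => (y ^ 5)⁻¹) (-(5 * t ^ 4) / (t ^ 5) ^ 2) t := by
    simpa [Pi.inv_def] using (hasDerivAt_pow 5 t).inv (pow_ne_zero 5 ht)
  have h := (h1.sub h3).add (h5.const_mul 3)
  have heq : -(t ^ 2)⁻¹ - -(3 * t ^ 2) / (t ^ 3) ^ 2 + 3 * (-(5 * t ^ 4) / (t ^ 5) ^ 2)
      = -(t ^ 2)⁻¹ + 3 * (t ^ 4)⁻¹ - 15 * (t ^ 6)⁻¹ := by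
    field_simp
    ring
  rw [heq] at h
  exact h

lemma hasDerivAt_mills {t : ℝ} (ht : t ≠ 0) :
    HasDerivAt mills (-(stdPhi t * (1 + 15 * (t ^ 6)⁻¹))) t := by
  have h := (hasDerivAt_stdPhi t).mul (hasDerivAt_polyP ht)
  have heq : -t * stdPhi t * polyP t
        + stdPhi t * (-(t ^ 2)⁻¹ + 3 * (t ^ 4)⁻¹ - 15 * (t ^ 6)⁻¹)
      = -(stdPhi t * (1 + 15 * (t ^ 6)⁻¹)) := by
    rw [polyP]; field_simp; ring
  rw [heq] at h
  exact h

lemma tendsto_polyP : Tendsto polyP atTop (𝓝 0) := by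
  have hp : ∀ n : ℕ, 1 ≤ n → Tendsto (fun t : ℝ => (t ^ n)⁻¹) atTop (𝓝 0) := by
    intro n hn
    exact (tendsto_pow_atTop (by omega)).inv_tendsto_atTop
  have h := ((hp 1 le_rfl).sub (hp 3 (by norm_num))).add ((hp 5 (by norm_num)).const_mul 3)
  simp only [sub_zero, add_zero, mul_zero, zero_add] at h
  have : polyP = fun t : ℝ => (t ^ 1)⁻¹ - (t ^ 3)⁻¹ + 3 * (t ^ 5)⁻¹ := by
    funext t; rw [polyP]; norm_num
  rw [this]
  simpa using h

lemma tendsto_mills : Tendsto mills atTop (𝓝 0) := by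
  have := tendsto_stdPhi_atTop.mul tendsto_polyP
  rw [show mills = fun t => stdPhi t * polyP t from rfl]
  simpa using this

lemma integrableOn_stdPhi_mul {x : ℝ} (hx : 0 < x) {g : ℝ → ℝ}
    (hg : ContinuousOn g (Set.Ioi x)) {M : ℝ} (hM : ∀ t ∈ Set.Ioi x, |g t| ≤ M) :
    IntegrableOn (fun t => stdPhi t * g t) (Set.Ioi x) := by
  apply integrableOn_of_le_gauss (b := 1/2) (by norm_num)
    ((continuous_stdPhi.continuousOn).mul hg) (M := Kc * M)
  intro t ht
  have h1 : |stdPhi t * g t| = stdPhi t * |g t| := by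
    rw [abs_mul, abs_of_pos (stdPhi_pos t)]
  show |stdPhi t * g t| ≤ _
  rw [h1, stdPhi_eq, show -(1/2 : ℝ) * t ^ 2 = -(t ^ 2) / 2 by ring]
  have h2 : (0:ℝ) < Kc * Real.exp (-(t^2)/2) := mul_pos Kc_pos (Real.exp_pos _)
  calc Kc * Real.exp (-(t ^ 2) / 2) * |g t| ≤ Kc * Real.exp (-(t ^ 2) / 2) * M :=
        mul_le_mul_of_nonneg_left (hM t ht) h2.le
    _ = Kc * M * Real.exp (-(t ^ 2) / 2) := by ring

lemma stdCdf_neg_expansion {v : ℝ} (hv : 0 < v) :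
    stdCdf (-v) = mills v - 15 * ∫ t in Set.Ioi v, stdPhi t * (t ^ 6)⁻¹ := by
  have hint6 : IntegrableOn (fun t => stdPhi t * (t ^ 6)⁻¹) (Set.Ioi v) := by
    apply integrableOn_stdPhi_mul hv
    · exact ContinuousOn.inv₀ (by fun_prop) fun t ht =>
        pow_ne_zero 6 (ne_of_gt (lt_trans hv ht))
    · intro t ht
      rw [abs_of_nonneg (by positivity : (0:ℝ) ≤ (t ^ 6)⁻¹)]
      exact inv_anti₀ (by positivity) (pow_le_pow_left₀ hv.le (le_of_lt ht) 6)
  have hintphi : IntegrableOn stdPhi (Set.Ioi v) := integrable_stdPhi.integrableOn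
  have hint : IntegrableOn (fun t => -(stdPhi t * (1 + 15 * (t ^ 6)⁻¹))) (Set.Ioi v) := by
    have : (fun t => -(stdPhi t * (1 + 15 * (t ^ 6)⁻¹)))
        = fun t => -(stdPhi t + 15 * (stdPhi t * (t ^ 6)⁻¹)) := by
      funext t; ring
    rw [this]
    exact ((hintphi.add ((hint6.const_mul 15))).neg)
  have hftc := integral_Ioi_of_hasDerivAt_of_tendsto'
    (f := mills) (f' := fun t => -(stdPhi t * (1 + 15 * (t ^ 6)⁻¹)))
    (fun t ht => hasDerivAt_mills (ne_of_gt (lt_of_lt_of_le hv ht)))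
    hint tendsto_mills
  have hsplit : ∫ t in Set.Ioi v, -(stdPhi t * (1 + 15 * (t ^ 6)⁻¹))
      = -((∫ t in Set.Ioi v, stdPhi t) + 15 * ∫ t in Set.Ioi v, stdPhi t * (t ^ 6)⁻¹) := by
    rw [show (fun t => -(stdPhi t * (1 + 15 * (t ^ 6)⁻¹)))
        = fun t => -(stdPhi t + 15 * (stdPhi t * (t ^ 6)⁻¹)) from funext fun t => by ring]
    rw [integral_neg, integral_add hintphi (hint6.const_mul 15), integral_const_mul]
  rw [hsplit] at hftc
  rw [stdCdf_neg_eq_Ioi]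
  have : (∫ t in Set.Ioi v, stdPhi t) + 15 * ∫ t in Set.Ioi v, stdPhi t * (t ^ 6)⁻¹
      = mills v := by linarith
  linarith

lemma integral_stdPhi_inv6_bounds {v : ℝ} (hv : 0 < v) :
    0 ≤ (∫ t in Set.Ioi v, stdPhi t * (t ^ 6)⁻¹) ∧
    (∫ t in Set.Ioi v, stdPhi t * (t ^ 6)⁻¹) ≤ (v ^ 7)⁻¹ * stdPhi v := by
  have hint6 : IntegrableOn (fun t => stdPhi t * (t ^ 6)⁻¹) (Set.Ioi v) := by
    apply integrableOn_stdPhi_mul hv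
    · exact ContinuousOn.inv₀ (by fun_prop) fun t ht =>
        pow_ne_zero 6 (ne_of_gt (lt_trans hv ht))
    · intro t ht
      rw [abs_of_nonneg (by positivity : (0:ℝ) ≤ (t ^ 6)⁻¹)]
      exact inv_anti₀ (by positivity) (pow_le_pow_left₀ hv.le (le_of_lt ht) 6)
  have hmul : Integrable (fun t : ℝ => t * stdPhi t) := by
    have h : (fun t : ℝ => t * stdPhi t) = fun t => Kc * (t * Real.exp (-(1/2:ℝ) * t ^ 2)) := by
      funext t; rw [stdPhi_eq]; ring_nf
    rw [h]
    exact (integrable_mul_exp_neg_mul_sq (by norm_num)).const_mul Kc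
  constructor
  · exact setIntegral_nonneg measurableSet_Ioi fun t ht =>
      mul_nonneg (stdPhi_pos t).le (by positivity)
  · have hle : ∀ t ∈ Set.Ioi v, stdPhi t * (t ^ 6)⁻¹ ≤ (v ^ 7)⁻¹ * (t * stdPhi t) := by
      intro t ht
      have htv : v < t := ht
      have htpos : 0 < t := lt_trans hv htv
      have h1 : (t ^ 6)⁻¹ ≤ (v ^ 7)⁻¹ * t := by
        rw [show (t ^ 6)⁻¹ = t / t ^ 7 by field_simp,
          show (v ^ 7)⁻¹ * t = t / v ^ 7 by ring]
        exact div_le_div_of_nonneg_left htpos.le (by positivity)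
          (pow_le_pow_left₀ hv.le htv.le 7) |>.trans_eq rfl
      calc stdPhi t * (t ^ 6)⁻¹ ≤ stdPhi t * ((v ^ 7)⁻¹ * t) :=
            mul_le_mul_of_nonneg_left h1 (stdPhi_pos t).le
        _ = (v ^ 7)⁻¹ * (t * stdPhi t) := by ring
    have := setIntegral_mono_on hint6 ((hmul.integrableOn).const_mul ((v^7)⁻¹))
      measurableSet_Ioi hle
    rwa [integral_const_mul, integral_Ioi_mul_stdPhi] at this

lemma stdCdf_neg_le {v : ℝ} (hv : 0 < v) : stdCdf (-v) ≤ v⁻¹ * stdPhi v := by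
  have hmul : Integrable (fun t : ℝ => t * stdPhi t) := by
    have h : (fun t : ℝ => t * stdPhi t) = fun t => Kc * (t * Real.exp (-(1/2:ℝ) * t ^ 2)) := by
      funext t; rw [stdPhi_eq]; ring_nf
    rw [h]
    exact (integrable_mul_exp_neg_mul_sq (by norm_num)).const_mul Kc
  rw [stdCdf_neg_eq_Ioi]
  have hle : ∀ t ∈ Set.Ioi v, stdPhi t ≤ v⁻¹ * (t * stdPhi t) := by
    intro t ht
    have htv : v < t := ht
    have h1 : (1:ℝ) ≤ v⁻¹ * t := by
      rw [show v⁻¹ * t = t / v by ring]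
      rw [le_div_iff₀ hv]; linarith
    calc stdPhi t = stdPhi t * 1 := by ring
      _ ≤ stdPhi t * (v⁻¹ * t) := mul_le_mul_of_nonneg_left h1 (stdPhi_pos t).le
      _ = v⁻¹ * (t * stdPhi t) := by ring
  have := setIntegral_mono_on integrable_stdPhi.integrableOn
    ((hmul.integrableOn).const_mul (v⁻¹)) measurableSet_Ioi hle
  rwa [integral_const_mul, integral_Ioi_mul_stdPhi] at this


-- stage 3
lemma continuous_snPdf (l : ℝ) : Continuous (snPdf l) := by
  unfold snPdf
  exact (continuous_const.mul continuous_stdPhi).mul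
    (continuous_stdCdf.comp (continuous_const.mul continuous_id))

lemma snPdf_nonneg (l t : ℝ) : 0 ≤ snPdf l t :=
  mul_nonneg (mul_nonneg (by norm_num) (stdPhi_pos t).le) (stdCdf_nonneg _)

lemma snPdf_le (l t : ℝ) : snPdf l t ≤ 2 * stdPhi t := by
  unfold snPdf
  nlinarith [stdPhi_pos t, stdCdf_le_one (l * t)]

lemma integrable_snPdf (l : ℝ) : Integrable (snPdf l) := by
  apply Integrable.mono' (integrable_stdPhi.const_mul 2)
    (continuous_snPdf l).aestronglyMeasurable
  refine ae_of_all _ fun t => ?_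
  rw [Real.norm_eq_abs, abs_of_nonneg (snPdf_nonneg l t)]
  exact snPdf_le l t

lemma integral_snPdf (l : ℝ) : ∫ t, snPdf l t = 1 := by
  have hkey : ∀ t, snPdf l (-t) = 2 * stdPhi t - snPdf l t := by
    intro t
    unfold snPdf
    rw [stdPhi_neg, mul_neg,
      show stdCdf (-(l * t)) = 1 - stdCdf (l * t) by linarith [stdCdf_add_neg (l * t)]]
    ring
  have hneg : ∫ t, snPdf l (-t) = ∫ t, snPdf l t :=
    (Measure.measurePreserving_neg volume).integral_comp
      (Homeomorph.neg ℝ).measurableEmbedding _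
  have hcomp : Integrable (fun t => snPdf l (-t)) := (integrable_snPdf l).comp_neg
  have hsum : ∫ t, (snPdf l t + snPdf l (-t)) = 2 := by
    have h1 : (fun t => snPdf l t + snPdf l (-t)) = fun t => 2 * stdPhi t := by
      funext t; rw [hkey]; ring
    rw [h1, integral_const_mul, integral_stdPhi]; norm_num
  rw [integral_add (integrable_snPdf l) hcomp, hneg] at hsum
  linarith

lemma one_sub_snCdf (l x : ℝ) : 1 - snCdf l x = ∫ t in Set.Ioi x, snPdf l t := by
  have h := intervalIntegral.integral_Iic_add_Ioi (b := x)
    (integrable_snPdf l).integrableOn (integrable_snPdf l).integrableOn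
  rw [integral_snPdf l] at h
  rw [snCdf]
  linarith


-- stage 4a
noncomputable def bC2 (l : ℝ) : ℝ := l / (Real.pi * (1 + l ^ 2))
noncomputable def bC4 (l : ℝ) : ℝ := -l * ((1 + l ^ 2) + 2) / (Real.pi * (1 + l ^ 2) ^ 2)
noncomputable def bC6 (l : ℝ) : ℝ :=
  l * (3 * (1 + l ^ 2) ^ 2 + 4 * (1 + l ^ 2) + 8) / (Real.pi * (1 + l ^ 2) ^ 3)
noncomputable def Bpoly (l t : ℝ) : ℝ :=
  bC2 l * (t ^ 2)⁻¹ + bC4 l * (t ^ 4)⁻¹ + bC6 l * (t ^ 6)⁻¹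
noncomputable def eA (l t : ℝ) : ℝ := Real.exp (-((1 + l ^ 2) * t ^ 2) / 2)
noncomputable def Hfun (l t : ℝ) : ℝ := stdCdf (l * t) * (2 * mills t) + Bpoly l t * eA l t
noncomputable def rfun (l t : ℝ) : ℝ :=
  -(30 * stdPhi t * stdCdf (l * t) * (t ^ 6)⁻¹) - 6 * bC6 l * (t ^ 7)⁻¹ * eA l t

lemma stdPhi_mul_stdPhi (l t : ℝ) : stdPhi (l * t) * stdPhi t = Kc ^ 2 * eA l t := by
  rw [stdPhi_eq (l * t), stdPhi_eq t, eA,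
    show (Kc * Real.exp (-((l * t) ^ 2) / 2)) * (Kc * Real.exp (-(t ^ 2) / 2))
      = Kc ^ 2 * Real.exp (-((l * t) ^ 2) / 2 + -(t ^ 2) / 2) by rw [Real.exp_add]; ring,
    show -((l * t) ^ 2) / 2 + -(t ^ 2) / 2 = -((1 + l ^ 2) * t ^ 2) / 2 by ring]

lemma hasDerivAt_eA (l t : ℝ) :
    HasDerivAt (eA l) (-((1 + l ^ 2) * t) * eA l t) t := by
  have h1 : HasDerivAt (fun s : ℝ => -((1 + l ^ 2) * s ^ 2) / 2) (-((1 + l ^ 2) * t)) t := by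
    have hp : HasDerivAt (fun s : ℝ => s ^ 2) (2 * t) t := by simpa using hasDerivAt_pow 2 t
    have := ((hp.const_mul (1 + l ^ 2)).neg).div_const 2
    rw [show -((1 + l ^ 2) * (2 * t)) / 2 = -((1 + l ^ 2) * t) by ring] at this
    exact this
  have := h1.exp
  have heq2 : Real.exp (-((1 + l ^ 2) * t ^ 2) / 2) * -((1 + l ^ 2) * t)
      = -((1 + l ^ 2) * t) * eA l t := by rw [eA]; ring
  rw [heq2] at this
  exact this

lemma hasDerivAt_inv_pow (n : ℕ) (hn : 1 ≤ n) {t : ℝ} (ht : t ≠ 0) :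
    HasDerivAt (fun y : ℝ => (y ^ n)⁻¹) (-(n : ℝ) * (t ^ (n + 1))⁻¹) t := by
  have h := (hasDerivAt_pow n t).inv (pow_ne_zero n ht)
  have heq : -(↑n * t ^ (n - 1)) / (t ^ n) ^ 2 = -(n : ℝ) * (t ^ (n + 1))⁻¹ := by
    rw [← pow_mul]
    rw [show t ^ (n - 1) = t ^ n / t by
      rw [eq_div_iff ht, ← pow_succ, Nat.sub_add_cancel hn]]
    field_simp
    ring
  rw [heq] at h
  exact h

lemma hasDerivAt_Bpoly (l : ℝ) {t : ℝ} (ht : t ≠ 0) :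
    HasDerivAt (Bpoly l)
      (bC2 l * (-2 * (t ^ 3)⁻¹) + bC4 l * (-4 * (t ^ 5)⁻¹) + bC6 l * (-6 * (t ^ 7)⁻¹)) t := by
  have h2 := (hasDerivAt_inv_pow 2 (by norm_num) ht).const_mul (bC2 l)
  have h4 := (hasDerivAt_inv_pow 4 (by norm_num) ht).const_mul (bC4 l)
  have h6 := (hasDerivAt_inv_pow 6 (by norm_num) ht).const_mul (bC6 l)
  have h := (h2.add h4).add h6
  have heq : bC2 l * (-(2:ℕ) * (t ^ (2+1))⁻¹) + bC4 l * (-(4:ℕ) * (t ^ (4+1))⁻¹)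
      + bC6 l * (-(6:ℕ) * (t ^ (6+1))⁻¹)
      = bC2 l * (-2 * (t ^ 3)⁻¹) + bC4 l * (-4 * (t ^ 5)⁻¹) + bC6 l * (-6 * (t ^ 7)⁻¹) := by
    norm_num
  rw [heq] at h
  exact h

lemma hasDerivAt_Hfun (l : ℝ) {t : ℝ} (ht : t ≠ 0) (hl : 1 + l ^ 2 ≠ 0) :
    HasDerivAt (Hfun l) (-(snPdf l t) + rfun l t) t := by
  have hC : HasDerivAt (fun y => stdCdf (l * y)) (stdPhi (l * t) * l) t :=
    (hasDerivAt_stdCdf (l * t)).comp t (by simpa using (hasDerivAt_id t).const_mul l)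
  have hM : HasDerivAt (fun y => 2 * mills y)
      (2 * -(stdPhi t * (1 + 15 * (t ^ 6)⁻¹))) t := (hasDerivAt_mills ht).const_mul 2
  have h1 := hC.mul hM
  have h2 := (hasDerivAt_Bpoly l ht).mul (hasDerivAt_eA l t)
  have h := h1.add h2
  have heq : stdPhi (l * t) * l * (2 * mills t)
      + stdCdf (l * t) * (2 * -(stdPhi t * (1 + 15 * (t ^ 6)⁻¹)))
      + ((bC2 l * (-2 * (t ^ 3)⁻¹) + bC4 l * (-4 * (t ^ 5)⁻¹) + bC6 l * (-6 * (t ^ 7)⁻¹)) * eA l t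
        + Bpoly l t * (-((1 + l ^ 2) * t) * eA l t))
      = -(snPdf l t) + rfun l t := by
    rw [mills, show stdPhi (l * t) * l * (2 * (stdPhi t * polyP t))
        = 2 * l * polyP t * (stdPhi (l * t) * stdPhi t) by ring,
      stdPhi_mul_stdPhi, Kc_sq, snPdf, rfun, Bpoly, polyP, bC2, bC4, bC6]
    have hpi := Real.pi_ne_zero
    field_simp
    ring
  rw [heq] at h
  exact h


-- stage 4b

lemma eA_pos (l t : ℝ) : 0 < eA l t := Real.exp_pos _

lemma tendsto_inv_pow_atTop {n : ℕ} (hn : 1 ≤ n) :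
    Tendsto (fun t : ℝ => (t ^ n)⁻¹) atTop (𝓝 0) :=
  (tendsto_pow_atTop (by omega)).inv_tendsto_atTop

lemma tendsto_Bpoly (l : ℝ) : Tendsto (fun t => Bpoly l t) atTop (𝓝 0) := by
  have h := (((tendsto_inv_pow_atTop (n := 2) (by norm_num)).const_mul (bC2 l)).add
    ((tendsto_inv_pow_atTop (n := 4) (by norm_num)).const_mul (bC4 l))).add
    ((tendsto_inv_pow_atTop (n := 6) (by norm_num)).const_mul (bC6 l))
  simpa [Bpoly] using h

lemma tendsto_eA (l : ℝ) : Tendsto (fun t => eA l t) atTop (𝓝 0) := by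
  have h := tendsto_exp_neg_sq (b := (1 + l ^ 2) / 2) (by positivity)
  have heq : (fun t : ℝ => Real.exp (-((1 + l ^ 2) / 2) * t ^ 2)) = fun t => eA l t := by
    funext t; rw [eA]; congr 1; ring
  rwa [heq] at h

lemma tendsto_Hfun (l : ℝ) : Tendsto (Hfun l) atTop (𝓝 0) := by
  have h1 : Tendsto (fun t => stdCdf (l * t) * (2 * mills t)) atTop (𝓝 0) := by
    refine squeeze_zero_norm (a := fun t => 2 * |mills t|) (fun t => ?_) ?_
    · rw [Real.norm_eq_abs, abs_mul]
      have h2 : |stdCdf (l * t)| ≤ 1 :=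
        abs_le.2 ⟨by linarith [stdCdf_nonneg (l * t)], stdCdf_le_one (l * t)⟩
      calc |stdCdf (l * t)| * |2 * mills t| ≤ 1 * |2 * mills t| :=
            mul_le_mul_of_nonneg_right h2 (abs_nonneg _)
        _ = 2 * |mills t| := by rw [one_mul, abs_mul]; norm_num
    · simpa using (tendsto_mills.abs.const_mul 2)

  have h2 := (tendsto_Bpoly l).mul (tendsto_eA l)
  have h := h1.add h2
  rw [show Hfun l = fun t => stdCdf (l * t) * (2 * mills t) + Bpoly l t * eA l t from rfl]
  simpa using h

lemma continuousOn_rfun (l : ℝ) {x : ℝ} (hx : 0 < x) :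
    ContinuousOn (rfun l) (Set.Ioi x) := by
  have hne6 : ∀ t ∈ Set.Ioi x, t ^ 6 ≠ 0 := fun t ht => pow_ne_zero 6 (ne_of_gt (hx.trans ht))
  have hne7 : ∀ t ∈ Set.Ioi x, t ^ 7 ≠ 0 := fun t ht => pow_ne_zero 7 (ne_of_gt (hx.trans ht))
  apply ContinuousOn.sub
  · apply ContinuousOn.neg
    apply ContinuousOn.mul
    · exact ((continuous_const.mul continuous_stdPhi).mul
        (continuous_stdCdf.comp (continuous_const.mul continuous_id))).continuousOn
    · exact ContinuousOn.inv₀ (by fun_prop) hne6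
  · apply ContinuousOn.mul
    · exact ContinuousOn.mul continuousOn_const (ContinuousOn.inv₀ (by fun_prop) hne7)
    · exact (Real.continuous_exp.comp (by fun_prop)).continuousOn

lemma integrableOn_rfun (l : ℝ) {x : ℝ} (hx : 0 < x) :
    IntegrableOn (rfun l) (Set.Ioi x) := by
  apply integrableOn_of_le_gauss (b := 1/2) (by norm_num) (continuousOn_rfun l hx)
    (M := 30 * Kc * (x ^ 6)⁻¹ + 6 * |bC6 l| * (x ^ 7)⁻¹)
  intro t ht
  have htx : x < t := ht
  have htpos : 0 < t := hx.trans htx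
  have hexp : Real.exp (-(1/2 : ℝ) * t ^ 2) = Real.exp (-(t ^ 2) / 2) := by
    congr 1; ring
  have h1 : |(30 * stdPhi t * stdCdf (l * t) * (t ^ 6)⁻¹)|
      ≤ 30 * Kc * (x ^ 6)⁻¹ * Real.exp (-(t ^ 2) / 2) := by
    rw [abs_of_nonneg (by
      have h0 := stdPhi_pos t
      have h0' := stdCdf_nonneg (l * t)
      have h0'' : (0:ℝ) ≤ (t ^ 6)⁻¹ := by positivity
      positivity : (0:ℝ) ≤ 30 * stdPhi t * stdCdf (l * t) * (t ^ 6)⁻¹)]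
    have hbd1 : stdCdf (l * t) * (t ^ 6)⁻¹ ≤ 1 * (x ^ 6)⁻¹ := by
      apply mul_le_mul (stdCdf_le_one _) _ (by positivity) one_pos.le
      exact inv_anti₀ (by positivity) (pow_le_pow_left₀ hx.le htx.le 6)
    calc 30 * stdPhi t * stdCdf (l * t) * (t ^ 6)⁻¹
        = 30 * stdPhi t * (stdCdf (l * t) * (t ^ 6)⁻¹) := by ring
      _ ≤ 30 * stdPhi t * (1 * (x ^ 6)⁻¹) := by
          apply mul_le_mul_of_nonneg_left hbd1
            (by nlinarith [stdPhi_pos t] : (0:ℝ) ≤ 30 * stdPhi t)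
      _ = 30 * Kc * (x ^ 6)⁻¹ * Real.exp (-(t ^ 2) / 2) := by rw [stdPhi_eq]; ring
  have h2 : |6 * bC6 l * (t ^ 7)⁻¹ * eA l t|
      ≤ 6 * |bC6 l| * (x ^ 7)⁻¹ * Real.exp (-(t ^ 2) / 2) := by
    rw [abs_mul, abs_mul, abs_mul, show |(6:ℝ)| = 6 by norm_num,
      abs_of_nonneg (by positivity : (0:ℝ) ≤ (t ^ 7)⁻¹), abs_of_pos (eA_pos l t)]
    have hb2 : (t ^ 7)⁻¹ ≤ (x ^ 7)⁻¹ :=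
      inv_anti₀ (by positivity) (pow_le_pow_left₀ hx.le htx.le 7)
    have hb3 : eA l t ≤ Real.exp (-(t ^ 2) / 2) := by
      rw [eA]
      apply Real.exp_le_exp.2
      nlinarith [sq_nonneg (l * t), sq_nonneg t]
    calc 6 * |bC6 l| * (t ^ 7)⁻¹ * eA l t
        ≤ 6 * |bC6 l| * (x ^ 7)⁻¹ * eA l t := by
          apply mul_le_mul_of_nonneg_right _ (eA_pos l t).le
          apply mul_le_mul_of_nonneg_left hb2 (by positivity)
      _ ≤ 6 * |bC6 l| * (x ^ 7)⁻¹ * Real.exp (-(t ^ 2) / 2) :=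
          mul_le_mul_of_nonneg_left hb3 (by positivity)
  calc |rfun l t| ≤ |(30 * stdPhi t * stdCdf (l * t) * (t ^ 6)⁻¹)|
        + |6 * bC6 l * (t ^ 7)⁻¹ * eA l t| := by
        rw [rfun]
        refine (abs_sub _ _).trans ?_
        rw [abs_neg]
    _ ≤ (30 * Kc * (x ^ 6)⁻¹ + 6 * |bC6 l| * (x ^ 7)⁻¹) * Real.exp (-(1/2 : ℝ) * t ^ 2) := by
        rw [hexp]; linarith

lemma polyP_div {x : ℝ} (hx : x ≠ 0) : polyP x = (x ^ 4 - x ^ 2 + 3) / x ^ 5 := by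
  rw [polyP]; field_simp

lemma polyP_neg_mul {l x : ℝ} (hl : l ≠ 0) (hx : x ≠ 0) :
    polyP (-l * x) = -((l ^ 4 * x ^ 4 - l ^ 2 * x ^ 2 + 3) / (l ^ 5 * x ^ 5)) := by
  have h : (-l) * x ≠ 0 := mul_ne_zero (neg_ne_zero.2 hl) hx
  rw [polyP]
  field_simp
  ring

lemma Bpoly_div (l : ℝ) {x : ℝ} (hx : x ≠ 0) (ha : (1:ℝ) + l ^ 2 ≠ 0) :
    Bpoly l x = (l * (1 + l ^ 2) ^ 2 * x ^ 4 - l * (1 + l ^ 2) * ((1 + l ^ 2) + 2) * x ^ 2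
      + l * (3 * (1 + l ^ 2) ^ 2 + 4 * (1 + l ^ 2) + 8)) / (Real.pi * (1 + l ^ 2) ^ 3 * x ^ 6) := by
  have hpi := Real.pi_ne_zero
  rw [Bpoly, bC2, bC4, bC6]
  field_simp
  ring

set_option maxHeartbeats 2000000 in
lemma main_identity (l : ℝ) {x : ℝ} (hl : l ≠ 0) (hx : x ≠ 0) :
    (mills (-l * x) * (2 * mills x) + Bpoly l x * eA l x)
      * (-l * Real.pi * (1 + l ^ 2) * x ^ 2) * Real.exp ((1 + l ^ 2) * x ^ 2 / 2)
    = 1 - ((1 + 3 * l ^ 2) / (l ^ 2 * (1 + l ^ 2))) * (x ^ 2)⁻¹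
      + ((15 * l ^ 4 + 10 * l ^ 2 + 3) / (l ^ 4 * (1 + l ^ 2) ^ 2)) * (x ^ 4)⁻¹
      - (3 * (1 + l ^ 2) ^ 2 / l ^ 4) * (x ^ 6)⁻¹
      + (9 * (1 + l ^ 2) / l ^ 4) * (x ^ 8)⁻¹ := by
  have hexp1 : eA l x * Real.exp ((1 + l ^ 2) * x ^ 2 / 2) = 1 := by
    rw [eA, ← Real.exp_add,
      show -((1 + l ^ 2) * x ^ 2) / 2 + (1 + l ^ 2) * x ^ 2 / 2 = 0 by ring, Real.exp_zero]
  have hexp2 : mills (-l * x) * mills x * Real.exp ((1 + l ^ 2) * x ^ 2 / 2)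
      = Kc ^ 2 * (polyP (-l * x) * polyP x) := by
    rw [mills, mills, show stdPhi (-l * x) * polyP (-l * x) * (stdPhi x * polyP x)
        = (stdPhi (-l * x) * stdPhi x) * (polyP (-l * x) * polyP x) by ring]
    rw [show (-l : ℝ) * x = -(l * x) by ring, stdPhi_neg, stdPhi_mul_stdPhi]
    rw [show Kc ^ 2 * eA l x * (polyP (-(l * x)) * polyP x)
        * Real.exp ((1 + l ^ 2) * x ^ 2 / 2)
        = Kc ^ 2 * (polyP (-(l * x)) * polyP x)
          * (eA l x * Real.exp ((1 + l ^ 2) * x ^ 2 / 2)) by ring, hexp1]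
    ring_nf
  rw [show (mills (-l * x) * (2 * mills x) + Bpoly l x * eA l x)
      * (-l * Real.pi * (1 + l ^ 2) * x ^ 2) * Real.exp ((1 + l ^ 2) * x ^ 2 / 2)
      = (mills (-l * x) * mills x * Real.exp ((1 + l ^ 2) * x ^ 2 / 2))
          * (2 * (-l * Real.pi * (1 + l ^ 2) * x ^ 2))
        + (eA l x * Real.exp ((1 + l ^ 2) * x ^ 2 / 2))
          * (Bpoly l x * (-l * Real.pi * (1 + l ^ 2) * x ^ 2)) by ring,
    hexp2, hexp1, Kc_sq]
  have hpi := Real.pi_ne_zero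
  have ha : (1 : ℝ) + l ^ 2 ≠ 0 := by positivity
  rw [polyP_div hx, polyP_neg_mul hl hx, Bpoly_div l hx ha]
  field_simp
  ring


set_option maxHeartbeats 1000000 in
theorem skew_normal_tail_expansion_neg (l : ℝ) (hl : l < 0) :
    ∃ C > (0 : ℝ), ∃ x₀ > (0 : ℝ), ∀ x ≥ x₀,
      |(1 - snCdf l x) * (-l) * Real.pi * (1 + l ^ 2) * x ^ 2 *
          Real.exp ((1 + l ^ 2) * x ^ 2 / 2) -
        (1 - ((1 + 3 * l ^ 2) / (l ^ 2 * (1 + l ^ 2))) * (x ^ 2)⁻¹ +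
          ((15 * l ^ 4 + 10 * l ^ 2 + 3) / (l ^ 4 * (1 + l ^ 2) ^ 2)) * (x ^ 4)⁻¹)|
        ≤ C * (x ^ 6)⁻¹ := by
  have hl0 : l ≠ 0 := ne_of_lt hl
  have hmu : (0:ℝ) < -l := by linarith
  have haa : (0:ℝ) < 1 + l ^ 2 := by positivity
  have hpi := Real.pi_pos
  have hKc := Kc_pos
  have hC0 : (0:ℝ) < 30 * Kc ^ 2 / (-l) + 6 * |bC6 l| := by
    have h1 : (0:ℝ) < 30 * Kc ^ 2 / (-l) := by positivity
    have h2 : (0:ℝ) ≤ |bC6 l| := abs_nonneg _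
    linarith
  refine ⟨(3 * (1 + l ^ 2) ^ 2 + 9 * (1 + l ^ 2)) / l ^ 4
      + 150 * Kc ^ 2 * Real.pi * (1 + l ^ 2) / l ^ 6
      + (30 * Kc ^ 2 / (-l) + 6 * |bC6 l|) * (-l) * Real.pi, ?_, 1, one_pos, fun x hx => ?_⟩
  · have h1 : (0:ℝ) < (3 * (1 + l ^ 2) ^ 2 + 9 * (1 + l ^ 2)) / l ^ 4 := by positivity
    have h2 : (0:ℝ) < 150 * Kc ^ 2 * Real.pi * (1 + l ^ 2) / l ^ 6 := by positivity
    have h3 : (0:ℝ) < (30 * Kc ^ 2 / (-l) + 6 * |bC6 l|) * (-l) * Real.pi :=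
      mul_pos (mul_pos hC0 hmu) hpi
    linarith
  have hx0 : (0:ℝ) < x := lt_of_lt_of_le one_pos hx
  have hxne : x ≠ 0 := ne_of_gt hx0
  -- FTC representation
  have hrint := integrableOn_rfun l hx0
  have hsnint : IntegrableOn (snPdf l) (Set.Ioi x) := (integrable_snPdf l).integrableOn
  have hftc := integral_Ioi_of_hasDerivAt_of_tendsto'
      (f := Hfun l) (f' := fun t => -(snPdf l t) + rfun l t)
      (fun t ht => hasDerivAt_Hfun l (ne_of_gt (lt_of_lt_of_le hx0 ht)) (ne_of_gt haa))
      (hsnint.neg.add hrint) (tendsto_Hfun l)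
  have hftc2 : ∫ t in Set.Ioi x, (-(snPdf l t) + rfun l t) = 0 - Hfun l x := hftc
  have hsplit : ∫ t in Set.Ioi x, (-(snPdf l t) + rfun l t)
      = -(∫ t in Set.Ioi x, snPdf l t) + ∫ t in Set.Ioi x, rfun l t := by
    rw [integral_add (f := fun t => -(snPdf l t)) hsnint.neg hrint, integral_neg]
  rw [hsplit] at hftc2
  have hrep : 1 - snCdf l x = Hfun l x + ∫ t in Set.Ioi x, rfun l t := by
    rw [one_sub_snCdf]; linarith
  -- bound on the remainder integral
  have hEA1 : eA l x * Real.exp ((1 + l ^ 2) * x ^ 2 / 2) = 1 := by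
    rw [eA, ← Real.exp_add,
      show -((1 + l ^ 2) * x ^ 2) / 2 + (1 + l ^ 2) * x ^ 2 / 2 = 0 by ring, Real.exp_zero]
  have hRb : |∫ t in Set.Ioi x, rfun l t|
      ≤ (30 * Kc ^ 2 / (-l) + 6 * |bC6 l|) * (x ^ 8)⁻¹ * (eA l x / (1 + l ^ 2)) := by
    have hb2 : (0:ℝ) < (1 + l ^ 2) / 2 := by positivity
    have hgint : Integrable
        (fun t => (30 * Kc ^ 2 / (-l) + 6 * |bC6 l|) * (x ^ 8)⁻¹
          * (t * Real.exp (-((1 + l ^ 2) / 2) * t ^ 2)))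
        (volume.restrict (Set.Ioi x)) :=
      ((integrable_mul_exp_neg_mul_sq hb2).const_mul _).restrict
    have hpt : ∀ᵐ t ∂(volume.restrict (Set.Ioi x)), ‖rfun l t‖
        ≤ (30 * Kc ^ 2 / (-l) + 6 * |bC6 l|) * (x ^ 8)⁻¹
          * (t * Real.exp (-((1 + l ^ 2) / 2) * t ^ 2)) := by
      filter_upwards [ae_restrict_mem measurableSet_Ioi] with t ht
      have htx : x < t := ht
      have ht0 : 0 < t := hx0.trans htx
      have hcdf : stdCdf (l * t) ≤ ((-l) * t)⁻¹ * stdPhi ((-l) * t) := by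
        have h := stdCdf_neg_le (v := (-l) * t) (mul_pos hmu ht0)
        rw [show -(-l * t) = l * t by ring] at h
        exact h
      have hphi : stdPhi ((-l) * t) = stdPhi (l * t) := by
        rw [show (-l) * t = -(l * t) by ring, stdPhi_neg]
      have h1 : 30 * stdPhi t * stdCdf (l * t) * (t ^ 6)⁻¹
          ≤ 30 * Kc ^ 2 / (-l) * ((t ^ 7)⁻¹ * eA l t) := by
        have step : stdPhi t * stdCdf (l * t) ≤ ((-l) * t)⁻¹ * (Kc ^ 2 * eA l t) := by
          calc stdPhi t * stdCdf (l * t)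
              ≤ stdPhi t * (((-l) * t)⁻¹ * stdPhi ((-l) * t)) :=
                mul_le_mul_of_nonneg_left hcdf (stdPhi_pos t).le
            _ = ((-l) * t)⁻¹ * (stdPhi (l * t) * stdPhi t) := by rw [hphi]; ring
            _ = ((-l) * t)⁻¹ * (Kc ^ 2 * eA l t) := by rw [stdPhi_mul_stdPhi]
        calc 30 * stdPhi t * stdCdf (l * t) * (t ^ 6)⁻¹
            = 30 * (t ^ 6)⁻¹ * (stdPhi t * stdCdf (l * t)) := by ring
          _ ≤ 30 * (t ^ 6)⁻¹ * (((-l) * t)⁻¹ * (Kc ^ 2 * eA l t)) :=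
              mul_le_mul_of_nonneg_left step (by positivity)
          _ = 30 * Kc ^ 2 / (-l) * ((t ^ 7)⁻¹ * eA l t) := by
              rw [mul_inv]
              field_simp
      have h2 : |6 * bC6 l * (t ^ 7)⁻¹ * eA l t| ≤ 6 * |bC6 l| * ((t ^ 7)⁻¹ * eA l t) := by
        rw [abs_mul, abs_mul, abs_mul, show |(6:ℝ)| = 6 by norm_num,
          abs_of_nonneg (by positivity : (0:ℝ) ≤ (t ^ 7)⁻¹), abs_of_pos (eA_pos l t)]
        exact le_of_eq (by ring)
      have h3 : (t ^ 7)⁻¹ ≤ (x ^ 8)⁻¹ * t := by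
        rw [show (t ^ 7)⁻¹ = t / t ^ 8 by field_simp,
          show (x ^ 8)⁻¹ * t = t / x ^ 8 by ring]
        exact div_le_div_of_nonneg_left ht0.le (by positivity)
          (pow_le_pow_left₀ hx0.le htx.le 8)
      have habs : ‖rfun l t‖ ≤ 30 * stdPhi t * stdCdf (l * t) * (t ^ 6)⁻¹
          + 6 * |bC6 l| * ((t ^ 7)⁻¹ * eA l t) := by
        rw [Real.norm_eq_abs, rfun]
        refine le_trans (abs_sub _ _) ?_
        rw [abs_neg, abs_of_nonneg (by
          have h0 := stdPhi_pos t
          have h0' := stdCdf_nonneg (l * t)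
          have h0'' : (0:ℝ) ≤ (t ^ 6)⁻¹ := by positivity
          positivity : (0:ℝ) ≤ 30 * stdPhi t * stdCdf (l * t) * (t ^ 6)⁻¹)]
        linarith [h2]
      have hsum : ‖rfun l t‖ ≤ (30 * Kc ^ 2 / (-l) + 6 * |bC6 l|) * ((t ^ 7)⁻¹ * eA l t) := by
        calc ‖rfun l t‖ ≤ 30 * stdPhi t * stdCdf (l * t) * (t ^ 6)⁻¹
              + 6 * |bC6 l| * ((t ^ 7)⁻¹ * eA l t) := habs
          _ ≤ 30 * Kc ^ 2 / (-l) * ((t ^ 7)⁻¹ * eA l t)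
              + 6 * |bC6 l| * ((t ^ 7)⁻¹ * eA l t) := by linarith [h1]
          _ = (30 * Kc ^ 2 / (-l) + 6 * |bC6 l|) * ((t ^ 7)⁻¹ * eA l t) := by ring
      calc ‖rfun l t‖ ≤ (30 * Kc ^ 2 / (-l) + 6 * |bC6 l|) * ((t ^ 7)⁻¹ * eA l t) := hsum
        _ ≤ (30 * Kc ^ 2 / (-l) + 6 * |bC6 l|) * (((x ^ 8)⁻¹ * t) * eA l t) := by
            apply mul_le_mul_of_nonneg_left _ hC0.le
            exact mul_le_mul_of_nonneg_right h3 (eA_pos l t).le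
        _ = (30 * Kc ^ 2 / (-l) + 6 * |bC6 l|) * (x ^ 8)⁻¹
              * (t * Real.exp (-((1 + l ^ 2) / 2) * t ^ 2)) := by
            rw [eA, show -((1 + l ^ 2) / 2) * t ^ 2 = -((1 + l ^ 2) * t ^ 2) / 2 by ring]
            ring
    have hnorm := norm_integral_le_of_norm_le hgint hpt
    rw [Real.norm_eq_abs] at hnorm
    refine hnorm.trans ?_
    rw [integral_const_mul, integral_Ioi_mul_exp hb2 x]
    rw [eA, show -((1 + l ^ 2) / 2) * x ^ 2 = -((1 + l ^ 2) * x ^ 2) / 2 by ring]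
    rw [show 2 * ((1 + l ^ 2) / 2) = 1 + l ^ 2 by ring]
  -- Mills expansion at -l*x
  have hmx : (0:ℝ) < (-l) * x := mul_pos hmu hx0
  have hcdfx : stdCdf (l * x) = mills ((-l) * x)
      - 15 * ∫ t in Set.Ioi ((-l) * x), stdPhi t * (t ^ 6)⁻¹ := by
    have h := stdCdf_neg_expansion hmx
    rw [show -((-l) * x) = l * x by ring] at h
    exact h
  obtain ⟨hI0, hIle⟩ := integral_stdPhi_inv6_bounds hmx
  -- key decomposition
  have hkey : (1 - snCdf l x) * (-l) * Real.pi * (1 + l ^ 2) * x ^ 2 *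
          Real.exp ((1 + l ^ 2) * x ^ 2 / 2) -
        (1 - ((1 + 3 * l ^ 2) / (l ^ 2 * (1 + l ^ 2))) * (x ^ 2)⁻¹ +
          ((15 * l ^ 4 + 10 * l ^ 2 + 3) / (l ^ 4 * (1 + l ^ 2) ^ 2)) * (x ^ 4)⁻¹)
      = (-(3 * (1 + l ^ 2) ^ 2 / l ^ 4) * (x ^ 6)⁻¹ + (9 * (1 + l ^ 2) / l ^ 4) * (x ^ 8)⁻¹)
        + (-(15 * (∫ t in Set.Ioi ((-l) * x), stdPhi t * (t ^ 6)⁻¹)) * (2 * mills x)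
            * (-l * Real.pi * (1 + l ^ 2) * x ^ 2) * Real.exp ((1 + l ^ 2) * x ^ 2 / 2))
        + (∫ t in Set.Ioi x, rfun l t) * (-l * Real.pi * (1 + l ^ 2) * x ^ 2)
            * Real.exp ((1 + l ^ 2) * x ^ 2 / 2) := by
    have hmain := main_identity l hl0 hxne
    rw [hrep, Hfun, hcdfx]
    linear_combination hmain
  rw [hkey]
  -- bound the three pieces
  have hx8 : (x ^ 8)⁻¹ ≤ (x ^ 6)⁻¹ := by
    apply inv_anti₀ (by positivity)
    calc x ^ 6 = x ^ 6 * 1 ^ 2 := by ring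
      _ ≤ x ^ 6 * x ^ 2 := by
          apply mul_le_mul_of_nonneg_left _ (by positivity)
          nlinarith [hx]
      _ = x ^ 8 := by ring
  have hb1 : |(-(3 * (1 + l ^ 2) ^ 2 / l ^ 4) * (x ^ 6)⁻¹ + (9 * (1 + l ^ 2) / l ^ 4) * (x ^ 8)⁻¹)|
      ≤ (3 * (1 + l ^ 2) ^ 2 + 9 * (1 + l ^ 2)) / l ^ 4 * (x ^ 6)⁻¹ := by
    have e1 : |(-(3 * (1 + l ^ 2) ^ 2 / l ^ 4) * (x ^ 6)⁻¹)|
        = 3 * (1 + l ^ 2) ^ 2 / l ^ 4 * (x ^ 6)⁻¹ := by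
      rw [abs_mul, abs_neg, abs_of_nonneg (by positivity : (0:ℝ) ≤ 3 * (1 + l ^ 2) ^ 2 / l ^ 4),
        abs_of_nonneg (by positivity : (0:ℝ) ≤ (x ^ 6)⁻¹)]
    have e2 : |(9 * (1 + l ^ 2) / l ^ 4) * (x ^ 8)⁻¹|
        = 9 * (1 + l ^ 2) / l ^ 4 * (x ^ 8)⁻¹ := by
      rw [abs_mul, abs_of_nonneg (by positivity : (0:ℝ) ≤ 9 * (1 + l ^ 2) / l ^ 4),
        abs_of_nonneg (by positivity : (0:ℝ) ≤ (x ^ 8)⁻¹)]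
    have e3 : 9 * (1 + l ^ 2) / l ^ 4 * (x ^ 8)⁻¹ ≤ 9 * (1 + l ^ 2) / l ^ 4 * (x ^ 6)⁻¹ :=
      mul_le_mul_of_nonneg_left hx8 (by positivity)
    calc |(-(3 * (1 + l ^ 2) ^ 2 / l ^ 4) * (x ^ 6)⁻¹ + (9 * (1 + l ^ 2) / l ^ 4) * (x ^ 8)⁻¹)|
        ≤ |(-(3 * (1 + l ^ 2) ^ 2 / l ^ 4) * (x ^ 6)⁻¹)|
          + |(9 * (1 + l ^ 2) / l ^ 4) * (x ^ 8)⁻¹| := abs_add_le _ _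
      _ ≤ 3 * (1 + l ^ 2) ^ 2 / l ^ 4 * (x ^ 6)⁻¹ + 9 * (1 + l ^ 2) / l ^ 4 * (x ^ 6)⁻¹ := by
          rw [e1, e2]; linarith
      _ = (3 * (1 + l ^ 2) ^ 2 + 9 * (1 + l ^ 2)) / l ^ 4 * (x ^ 6)⁻¹ := by ring
  -- Mills error piece
  have hPpos : (0:ℝ) < -l * Real.pi * (1 + l ^ 2) * x ^ 2 :=
    mul_pos (mul_pos (mul_pos hmu hpi) haa) (by positivity)
  have hmillsb : |mills x| ≤ stdPhi x * (5 * x⁻¹) := by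
    rw [mills, abs_mul, abs_of_pos (stdPhi_pos x)]
    apply mul_le_mul_of_nonneg_left _ (stdPhi_pos x).le
    rw [polyP]
    have hx1 : (1:ℝ) ≤ x := hx
    have i3 : (x ^ 3)⁻¹ ≤ x⁻¹ := by
      apply inv_anti₀ hx0
      calc x = x ^ 1 := by ring
        _ ≤ x ^ 3 := pow_le_pow_right₀ hx1 (by norm_num)
    have i5 : (x ^ 5)⁻¹ ≤ x⁻¹ := by
      apply inv_anti₀ hx0
      calc x = x ^ 1 := by ring
        _ ≤ x ^ 5 := pow_le_pow_right₀ hx1 (by norm_num)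
    have i1 : (0:ℝ) ≤ x⁻¹ := by positivity
    have i30 : (0:ℝ) ≤ (x ^ 3)⁻¹ := by positivity
    have i50 : (0:ℝ) ≤ (x ^ 5)⁻¹ := by positivity
    calc |x⁻¹ - (x ^ 3)⁻¹ + 3 * (x ^ 5)⁻¹|
        ≤ |x⁻¹ - (x ^ 3)⁻¹| + |3 * (x ^ 5)⁻¹| := abs_add_le _ _
      _ ≤ (|x⁻¹| + |(x ^ 3)⁻¹|) + |3 * (x ^ 5)⁻¹| := by
          linarith [abs_sub x⁻¹ (x ^ 3)⁻¹]
      _ = x⁻¹ + (x ^ 3)⁻¹ + 3 * (x ^ 5)⁻¹ := by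
          rw [abs_of_nonneg i1, abs_of_nonneg i30, abs_mul,
            show |(3:ℝ)| = 3 by norm_num, abs_of_nonneg i50]
      _ ≤ 5 * x⁻¹ := by linarith
  have hIdE : stdPhi ((-l) * x) * stdPhi x * Real.exp ((1 + l ^ 2) * x ^ 2 / 2) = Kc ^ 2 := by
    have h := stdPhi_mul_stdPhi l x
    rw [show (-l) * x = -(l * x) by ring, stdPhi_neg, h, mul_assoc, hEA1, mul_one]
  have hb2 : |(-(15 * (∫ t in Set.Ioi ((-l) * x), stdPhi t * (t ^ 6)⁻¹)) * (2 * mills x)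
        * (-l * Real.pi * (1 + l ^ 2) * x ^ 2) * Real.exp ((1 + l ^ 2) * x ^ 2 / 2))|
      ≤ 150 * Kc ^ 2 * Real.pi * (1 + l ^ 2) / l ^ 6 * (x ^ 6)⁻¹ := by
    rw [abs_mul, abs_mul, abs_mul, abs_neg,
      abs_of_nonneg (by linarith : (0:ℝ) ≤ 15 * (∫ t in Set.Ioi ((-l) * x), stdPhi t * (t ^ 6)⁻¹)),
      abs_mul, show |(2:ℝ)| = 2 by norm_num, abs_of_pos hPpos,
      abs_of_pos (Real.exp_pos _)]
    calc 15 * (∫ t in Set.Ioi ((-l) * x), stdPhi t * (t ^ 6)⁻¹) * (2 * |mills x|)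
          * (-l * Real.pi * (1 + l ^ 2) * x ^ 2) * Real.exp ((1 + l ^ 2) * x ^ 2 / 2)
        ≤ 15 * ((((-l) * x) ^ 7)⁻¹ * stdPhi ((-l) * x)) * (2 * (stdPhi x * (5 * x⁻¹)))
          * (-l * Real.pi * (1 + l ^ 2) * x ^ 2) * Real.exp ((1 + l ^ 2) * x ^ 2 / 2) := by
          apply mul_le_mul_of_nonneg_right _ (Real.exp_pos _).le
          apply mul_le_mul_of_nonneg_right _ hPpos.le
          apply mul_le_mul
          · exact mul_le_mul_of_nonneg_left hIle (by norm_num)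
          · exact mul_le_mul_of_nonneg_left hmillsb (by norm_num)
          · positivity
          · have := stdPhi_pos ((-l) * x)
            positivity
      _ = 150 * ((((-l) * x) ^ 7)⁻¹ * x⁻¹ * (-l * Real.pi * (1 + l ^ 2) * x ^ 2))
          * (stdPhi ((-l) * x) * stdPhi x * Real.exp ((1 + l ^ 2) * x ^ 2 / 2)) := by ring
      _ = 150 * Kc ^ 2 * Real.pi * (1 + l ^ 2) / l ^ 6 * (x ^ 6)⁻¹ := by
          rw [hIdE]
          have hlx7 : ((-l) * x) ^ 7 = -(l ^ 7) * x ^ 7 := by ring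
          rw [hlx7]
          field_simp
  have hb3 : |(∫ t in Set.Ioi x, rfun l t) * (-l * Real.pi * (1 + l ^ 2) * x ^ 2)
        * Real.exp ((1 + l ^ 2) * x ^ 2 / 2)|
      ≤ (30 * Kc ^ 2 / (-l) + 6 * |bC6 l|) * (-l) * Real.pi * (x ^ 6)⁻¹ := by
    rw [abs_mul, abs_mul, abs_of_pos hPpos, abs_of_pos (Real.exp_pos _)]
    calc |∫ t in Set.Ioi x, rfun l t| * (-l * Real.pi * (1 + l ^ 2) * x ^ 2)
          * Real.exp ((1 + l ^ 2) * x ^ 2 / 2)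
        ≤ ((30 * Kc ^ 2 / (-l) + 6 * |bC6 l|) * (x ^ 8)⁻¹ * (eA l x / (1 + l ^ 2)))
          * (-l * Real.pi * (1 + l ^ 2) * x ^ 2) * Real.exp ((1 + l ^ 2) * x ^ 2 / 2) := by
          apply mul_le_mul_of_nonneg_right _ (Real.exp_pos _).le
          exact mul_le_mul_of_nonneg_right hRb hPpos.le
      _ = ((30 * Kc ^ 2 / (-l) + 6 * |bC6 l|) * (-l) * Real.pi * ((x ^ 8)⁻¹ * x ^ 2))
          * (eA l x * Real.exp ((1 + l ^ 2) * x ^ 2 / 2)) := by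
          field_simp
      _ = (30 * Kc ^ 2 / (-l) + 6 * |bC6 l|) * (-l) * Real.pi * (x ^ 6)⁻¹ := by
          rw [hEA1, mul_one]
          congr 1
          rw [show (x ^ 8)⁻¹ * x ^ 2 = x ^ 2 / x ^ 8 by ring, eq_comm,
            inv_eq_iff_eq_inv]
          field_simp
  calc |(-(3 * (1 + l ^ 2) ^ 2 / l ^ 4) * (x ^ 6)⁻¹ + (9 * (1 + l ^ 2) / l ^ 4) * (x ^ 8)⁻¹)
        + (-(15 * (∫ t in Set.Ioi ((-l) * x), stdPhi t * (t ^ 6)⁻¹)) * (2 * mills x)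
            * (-l * Real.pi * (1 + l ^ 2) * x ^ 2) * Real.exp ((1 + l ^ 2) * x ^ 2 / 2))
        + (∫ t in Set.Ioi x, rfun l t) * (-l * Real.pi * (1 + l ^ 2) * x ^ 2)
            * Real.exp ((1 + l ^ 2) * x ^ 2 / 2)|
      ≤ |(-(3 * (1 + l ^ 2) ^ 2 / l ^ 4) * (x ^ 6)⁻¹ + (9 * (1 + l ^ 2) / l ^ 4) * (x ^ 8)⁻¹)|
        + |(-(15 * (∫ t in Set.Ioi ((-l) * x), stdPhi t * (t ^ 6)⁻¹)) * (2 * mills x)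
            * (-l * Real.pi * (1 + l ^ 2) * x ^ 2) * Real.exp ((1 + l ^ 2) * x ^ 2 / 2))|
        + |(∫ t in Set.Ioi x, rfun l t) * (-l * Real.pi * (1 + l ^ 2) * x ^ 2)
            * Real.exp ((1 + l ^ 2) * x ^ 2 / 2)| := by
        exact (abs_add_le _ _).trans (add_le_add_left (abs_add_le _ _) _)
    _ ≤ ((3 * (1 + l ^ 2) ^ 2 + 9 * (1 + l ^ 2)) / l ^ 4
        + 150 * Kc ^ 2 * Real.pi * (1 + l ^ 2) / l ^ 6
        + (30 * Kc ^ 2 / (-l) + 6 * |bC6 l|) * (-l) * Real.pi) * (x ^ 6)⁻¹ := by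
        rw [show ((3 * (1 + l ^ 2) ^ 2 + 9 * (1 + l ^ 2)) / l ^ 4
            + 150 * Kc ^ 2 * Real.pi * (1 + l ^ 2) / l ^ 6
            + (30 * Kc ^ 2 / (-l) + 6 * |bC6 l|) * (-l) * Real.pi) * (x ^ 6)⁻¹
          = (3 * (1 + l ^ 2) ^ 2 + 9 * (1 + l ^ 2)) / l ^ 4 * (x ^ 6)⁻¹
            + 150 * Kc ^ 2 * Real.pi * (1 + l ^ 2) / l ^ 6 * (x ^ 6)⁻¹
            + (30 * Kc ^ 2 / (-l) + 6 * |bC6 l|) * (-l) * Real.pi * (x ^ 6)⁻¹ by ring]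
        exact add_le_add (add_le_add hb1 hb2) hb3
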